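/- If R is a nilpotent ring of nilpotency degree n, then the adjoint group R^∘ is nilpotent of class at most n. -/

import Mathlib

/-- `prodsOf R n` is the set of all products of `n + 1` elements of `R`. -/
def prodsOf (R : Type*) [NonUnitalRing R] : ℕ → Set R
  | 0 => Set.univ
  | n + 1 => {z | ∃ x ∈ prodsOf R n, ∃ y : R, z = x * y}

namespace AdjointNilpotent

variable {R : Type*} [NonUnitalRing R]

lemma prodsOf_mul_self : ∀ (k : ℕ) (p : R), p ∈ prodsOf R k → ∀ y : R, p * y ∈ prodsOf R k
  | 0, _, _, _ => trivial
  | k+1, p, ⟨q, hq, z, hz⟩, y => ⟨q, hq, z * y, by rw [hz, mul_assoc]⟩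

lemma prodsOf_mul_succ (k : ℕ) (p : R) (hp : p ∈ prodsOf R k) (y : R) :
    p * y ∈ prodsOf R (k+1) := ⟨p, hp, y, rfl⟩

lemma prodsOf_lmul_succ : ∀ (k : ℕ) (p : R), p ∈ prodsOf R k → ∀ r : R,
    r * p ∈ prodsOf R (k+1)
  | 0, p, _, r => ⟨r, trivial, p, rfl⟩
  | k+1, p, ⟨q, hq, z, hz⟩, r => ⟨r * q, prodsOf_lmul_succ k q hq r, z, by
      rw [hz, mul_assoc]⟩

lemma prodsOf_succ_subset (k : ℕ) : prodsOf R (k+1) ⊆ prodsOf R k := by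
  rintro p ⟨q, hq, z, rfl⟩
  exact prodsOf_mul_self k q hq z

/-- The additive span of products of `k+1` elements. -/
def S (R : Type*) [NonUnitalRing R] (k : ℕ) : AddSubgroup R :=
  AddSubgroup.closure (prodsOf R k)

lemma S_antitone (k : ℕ) : S R (k+1) ≤ S R k :=
  AddSubgroup.closure_mono (prodsOf_succ_subset k)

lemma S_mul_right {k : ℕ} {s : R} (hs : s ∈ S R k) (y : R) : s * y ∈ S R (k+1) := by
  induction hs using AddSubgroup.closure_induction with
  | mem p hp => exact AddSubgroup.subset_closure (prodsOf_mul_succ k p hp y)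
  | zero => simpa using (S R (k+1)).zero_mem
  | add a b _ _ ha hb => simpa [add_mul] using (S R (k+1)).add_mem ha hb
  | neg a _ ha => simpa [neg_mul] using (S R (k+1)).neg_mem ha

lemma S_mul_left {k : ℕ} {s : R} (hs : s ∈ S R k) (r : R) : r * s ∈ S R (k+1) := by
  induction hs using AddSubgroup.closure_induction with
  | mem p hp => exact AddSubgroup.subset_closure (prodsOf_lmul_succ k p hp r)
  | zero => simpa using (S R (k+1)).zero_mem
  | add a b _ _ ha hb => simpa [mul_add] using (S R (k+1)).add_mem ha hb
  | neg a _ ha => simpa [mul_neg] using (S R (k+1)).neg_mem ha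

lemma S_mul_right_self {k : ℕ} {s : R} (hs : s ∈ S R k) (y : R) : s * y ∈ S R k :=
  S_antitone k (S_mul_right hs y)

lemma S_mul_left_self {k : ℕ} {s : R} (hs : s ∈ S R k) (r : R) : r * s ∈ S R k :=
  S_antitone k (S_mul_left hs r)

/-- "Geometric series" resolution of the implicit equation `c = d + c * x`. -/
lemma geo {k : ℕ} {x d c : R} (hd : d ∈ S R k) (hc : c = d + c * x) :
    ∀ m : ℕ, ∃ s ∈ S R k, ∃ r ∈ prodsOf R m, c = s + c * r
  | 0 => ⟨d, hd, x, trivial, hc⟩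
  | m+1 => by
    obtain ⟨s, hs, r, hr, hcr⟩ := geo hd hc m
    refine ⟨s + d * r, (S R k).add_mem hs (S_mul_right_self hd r), x * r,
      prodsOf_lmul_succ m r hr x, ?_⟩
    calc c = s + c * r := hcr
    _ = s + (d + c * x) * r := by rw [← hc]
    _ = s + d * r + c * (x * r) := by rw [add_mul, mul_assoc]; abel

end AdjointNilpotent

open AdjointNilpotent commutatorElement in
/-- If `R` is a nilpotent ring of nilpotency degree (at most) `n`, then its adjoint
group `R^∘` (here: any group `G` isomorphic, via `e`, to `R` with the circle
operation `x ∘ y = x + y + x * y` and identity `0`) is nilpotent of class at most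
`n`, i.e. `γ_{n+1} = lowerCentralSeries G n = ⊥`. -/
theorem adjoint_group_of_nilpotent_ring_is_nilpotent {R : Type*} [NonUnitalRing R]
    {G : Type*} [Group G] (n : ℕ)
    (hnil : ∀ z ∈ prodsOf R n, z = 0)
    (e : G ≃ R) (he1 : e 1 = 0)
    (hemul : ∀ g h : G, e (g * h) = e g + e h + e g * e h) :
    (⊤ : Subgroup G).lowerCentralSeries n = ⊥ := by
  -- the subgroup of `G` mapping into `S R k`
  have hinv : ∀ g : G, e g⁻¹ = -(e g) - e g * e g⁻¹ := by
    intro g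
    have := hemul g g⁻¹
    rw [mul_inv_cancel, he1] at this
    linear_combination (norm := noncomm_ring) -this
  let H : ℕ → Subgroup G := fun k =>
    { carrier := {g | e g ∈ S R k}
      one_mem' := by
        show e 1 ∈ S R k
        rw [he1]; exact (S R k).zero_mem
      mul_mem' := by
        intro g h hg hh
        show e (g * h) ∈ S R k
        rw [hemul]
        exact (S R k).add_mem ((S R k).add_mem hg hh) (S_mul_right_self hg (e h))
      inv_mem' := by
        intro g hg
        show e g⁻¹ ∈ S R k
        rw [hinv g]
        exact (S R k).sub_mem ((S R k).neg_mem hg) (S_mul_right_self hg (e g⁻¹)) }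
  -- key commutator estimate
  have key : ∀ (k : ℕ) (g h : G), e g ∈ S R k → e ⁅g, h⁆ ∈ S R (k+1) := by
    intro k g h hg
    set a := e g with ha
    set b := e h with hb
    set c := e ⁅g, h⁆ with hc
    have hgh : ⁅g, h⁆ * (h * g) = g * h := by
      group
    have heq : c + (b + a + b * a) + c * (b + a + b * a) = a + b + a * b := by
      have h1 := hemul ⁅g, h⁆ (h * g)
      rw [hgh, hemul g h, hemul h g] at h1
      linear_combination (norm := noncomm_ring) -h1
    have hd : a * b - b * a ∈ S R (k+1) :=
      (S R (k+1)).sub_mem (S_mul_right hg b) (S_mul_left hg b)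
    have hceq : c = (a * b - b * a) + c * (-(b + a + b * a)) := by
      rw [mul_neg]
      linear_combination (norm := noncomm_ring) heq
    obtain ⟨s, hs, r, hr, hcr⟩ := geo hd hceq n
    rw [hnil r hr, mul_zero, add_zero] at hcr
    rwa [hcr]
  -- lower central series is contained in `H k`
  have main : ∀ k : ℕ, (⊤ : Subgroup G).lowerCentralSeries k ≤ H k := by
    intro k
    induction k with
    | zero =>
      intro g _
      show e g ∈ S R 0
      exact AddSubgroup.subset_closure (by trivial)
    | succ k ih =>
      rw [Subgroup.lowerCentralSeries_succ]
      apply Subgroup.commutator_le.mpr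
      intro g hg h _
      exact key k g h (ih hg)
  -- conclude
  rw [eq_bot_iff]
  intro g hg
  have : e g ∈ S R n := main n hg
  have hz : e g = 0 := by
    have hsub : S R n ≤ ⊥ := by
      apply (AddSubgroup.closure_le _).mpr
      intro z hz
      simpa using hnil z hz
    simpa using hsub this
  have : g = 1 := e.injective (by rw [hz, he1])
  simp [this]
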